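/- arXiv:2003.07549 — 10 statements merged into one kernel-verified Lean document; each statement's English description precedes it below -/
import Mathlib

section
/- For any point v ∈ ℝ^p, let x_v ∈ S be an optimal solution of problem (P²(v)) (minimize g_v over S) and t_v = g_v(x_v) its optimal value. Then w_v = v + t_v·d̂ is a weakly nondominated point of Y⁺ (i.e. w_v ∈ WMin Y⁺), and x_v is a weakly efficient solution of (QVP) (i.e. x_v ∈ S_WE). -/
open Pointwise

/-- The nonnegative orthant `ℝ₊^p`. -/
def posOrthant (p : ℕ) : Set (Fin p → ℝ) := {y | ∀ j, 0 ≤ y j}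

/-- The set of weakly nondominated points of `Q`. -/
def wMinSet {p : ℕ} (Q : Set (Fin p → ℝ)) : Set (Fin p → ℝ) :=
  {q ∈ Q | ¬ ∃ q' ∈ Q, ∀ j, q' j < q j}

theorem stmt_5 {n p : ℕ} (hn : 1 ≤ n) (hp : 2 ≤ p)
    (S : Set (Fin n → ℝ)) (hSne : S.Nonempty) (hSconv : Convex ℝ S) (hScomp : IsCompact S)
    (f : (Fin n → ℝ) → (Fin p → ℝ)) (hfcont : Continuous f)
    (hfsqc : ∀ i, ∀ x1 ∈ S, ∀ x2 ∈ S, ∀ l : ℝ, 0 < l → l < 1 →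
      f x1 i < f x2 i → f (l • x1 + (1 - l) • x2) i < f x2 i)
    (d : Fin p → ℝ) (hd : ∀ j, 0 < d j) (v : Fin p → ℝ)
    (xv : Fin n → ℝ) (hxv : xv ∈ S)
    (hopt : ∀ x ∈ S, (⨆ j, (f xv j - v j) / d j) ≤ ⨆ j, (f x j - v j) / d j) :
    v + (⨆ j, (f xv j - v j) / d j) • d ∈ wMinSet (f '' S + posOrthant p) ∧
      ¬ ∃ x ∈ S, ∀ j, f x j < f xv j := by
  haveI : Nonempty (Fin p) := ⟨⟨0, by omega⟩⟩
  set t := ⨆ j, (f xv j - v j) / d j with ht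
  have hle : ∀ j, (f xv j - v j) / d j ≤ t := fun j =>
    le_ciSup (f := fun j => (f xv j - v j) / d j) (Set.Finite.bddAbove (Set.finite_range _)) j
  -- sup is attained
  have hsup : ∀ x : Fin n → ℝ, ∃ j0, (⨆ j, (f x j - v j) / d j) = (f x j0 - v j0) / d j0 := by
    intro x
    obtain ⟨j0, hj0⟩ := exists_eq_ciSup_of_finite (f := fun j => (f x j - v j) / d j)
    exact ⟨j0, hj0.symm⟩
  -- key: if for some x ∈ S all components satisfy f x j < v j + t * d j, contradiction
  have key : ∀ x ∈ S, ¬ (∀ j, f x j < v j + t * d j) := by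
    intro x hxS hall
    obtain ⟨j0, hj0⟩ := hsup x
    have h1 : (f x j0 - v j0) / d j0 < t := by
      rw [div_lt_iff₀ (hd j0)]
      linarith [hall j0]
    have h2 := hopt x hxS
    rw [hj0] at h2
    linarith
  refine ⟨⟨?_, ?_⟩, ?_⟩
  · -- membership
    refine Set.mem_add.2 ⟨f xv, ⟨xv, hxv, rfl⟩, (fun j => v j + t * d j - f xv j), ?_, ?_⟩
    · intro j
      have := (div_le_iff₀ (hd j)).1 (hle j)
      simp only [Set.mem_setOf_eq] at *
      linarith
    · funext j
      simp only [Pi.add_apply, Pi.smul_apply, smul_eq_mul]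
      ring
  · -- weak nondomination
    rintro ⟨q', hq', hlt⟩
    obtain ⟨y, ⟨x, hxS, rfl⟩, r, hr, rfl⟩ := Set.mem_add.1 hq'
    refine key x hxS fun j => ?_
    have := hlt j
    have hrj : 0 ≤ r j := hr j
    simp only [Pi.add_apply, Pi.smul_apply, smul_eq_mul] at this
    linarith
  · -- weak efficiency
    rintro ⟨x, hxS, hlt⟩
    refine key x hxS fun j => ?_
    have h1 := (div_le_iff₀ (hd j)).1 (hle j)
    have := hlt j
    linarith
end

section
/- Any nonempty compact conormal set is the intersection of a family of copolyblocks: if Q ⊆ [m,M] is nonempty, compact and conormal, then Q equals the intersection of all copolyblocks in [m,M] that contain Q; equivalently, for every y ∈ [m,M] with y ∉ Q there exists a copolyblock P ⊆ [m,M] with Q ⊆ P and y ∉ P. -/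
/-- The box `[a, b]` in `ℝ^p`. -/
def box {p : ℕ} (a b : Fin p → ℝ) : Set (Fin p → ℝ) := {z | a ≤ z ∧ z ≤ b}

/-- The copolyblock with vertex set `V` in the box `[m, M]`: `⋃_{v ∈ V} [v, M]`. -/
def copolyblock {p : ℕ} (V : Set (Fin p → ℝ)) (M : Fin p → ℝ) : Set (Fin p → ℝ) :=
  ⋃ v ∈ V, box v M

theorem stmt_9 {p : ℕ} (hp : 2 ≤ p)
    (m M : Fin p → ℝ) (hmM : m ≤ M)
    (Q : Set (Fin p → ℝ)) (hQsub : Q ⊆ box m M)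
    (hQne : Q.Nonempty) (hQcomp : IsCompact Q)
    (hQconormal : ∀ y ∈ Q, box y M ⊆ Q) :
    (Q = ⋂₀ {P | ∃ V : Set (Fin p → ℝ), V.Finite ∧ V.Nonempty ∧ V ⊆ box m M ∧
        P = copolyblock V M ∧ Q ⊆ P}) ∧
      (∀ y ∈ box m M, y ∉ Q →
        ∃ V : Set (Fin p → ℝ), V.Finite ∧ V.Nonempty ∧ V ⊆ box m M ∧
          Q ⊆ copolyblock V M ∧ y ∉ copolyblock V M) := by
  have hpne : (Finset.univ : Finset (Fin p)).Nonempty :=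
    ⟨⟨0, by omega⟩, Finset.mem_univ _⟩
  -- the key separation statement
  have key : ∀ y ∈ box m M, y ∉ Q →
      ∃ V : Set (Fin p → ℝ), V.Finite ∧ V.Nonempty ∧ V ⊆ box m M ∧
        Q ⊆ copolyblock V M ∧ y ∉ copolyblock V M := by
    intro y hy hyQ
    -- the function g q = max_i (q i - y i)
    set g : (Fin p → ℝ) → ℝ := fun q => Finset.univ.sup' hpne (fun i => q i - y i) with hg
    have hgc : Continuous g := by
      apply Continuous.finset_sup'_apply hpne
      intro i _
      exact (continuous_apply i).sub continuous_const
    obtain ⟨q0, hq0Q, hq0min⟩ := hQcomp.exists_isMinOn hQne hgc.continuousOn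
    -- g q0 > 0
    have hδ : 0 < g q0 := by
      by_contra h
      push_neg at h
      have hq0y : q0 ≤ y := by
        intro i
        have := Finset.le_sup' (fun i => q0 i - y i) (Finset.mem_univ i)
        have : q0 i - y i ≤ g q0 := this
        linarith
      exact hyQ (hQconormal q0 hq0Q ⟨hq0y, hy.2⟩)
    set δ := g q0 with hδdef
    -- every q in Q has a coordinate with q i ≥ y i + δ
    have hcoord : ∀ q ∈ Q, ∃ i, y i + δ ≤ q i := by
      intro q hqQ
      have hle : δ ≤ g q := hq0min hqQ
      obtain ⟨i, -, hi⟩ := Finset.exists_mem_eq_sup' hpne (fun i => q i - y i)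
      refine ⟨i, ?_⟩
      have : g q = q i - y i := hi
      linarith
    set I : Set (Fin p) := {i | y i + δ ≤ M i} with hI
    set v : Fin p → (Fin p → ℝ) := fun i => Function.update m i (y i + δ) with hv
    have hIne : I.Nonempty := by
      obtain ⟨i, hi⟩ := hcoord q0 hq0Q
      exact ⟨i, le_trans hi ((hQsub hq0Q).2 i)⟩
    refine ⟨v '' I, (Set.toFinite I).image v, hIne.image v, ?_, ?_, ?_⟩
    · rintro _ ⟨i, hiI, rfl⟩
      constructor
      · intro j
        rcases eq_or_ne j i with rfl | hji
        · simp only [hv, Function.update_self]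
          have := hy.1 j
          linarith
        · simp [hv, Function.update_of_ne hji]
      · intro j
        rcases eq_or_ne j i with rfl | hji
        · simpa [hv, hI, Function.update_self] using hiI
        · simp only [hv, Function.update_of_ne hji]; exact hmM j
    · intro q hqQ
      obtain ⟨i, hi⟩ := hcoord q hqQ
      have hiI : i ∈ I := le_trans hi ((hQsub hqQ).2 i)
      refine Set.mem_biUnion ⟨i, hiI, rfl⟩ ⟨?_, (hQsub hqQ).2⟩
      intro j
      rcases eq_or_ne j i with rfl | hji
      · simpa [hv, Function.update_self] using hi
      · simp only [hv, Function.update_of_ne hji]; exact (hQsub hqQ).1 j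
    · intro hyP
      rw [copolyblock, Set.mem_iUnion₂] at hyP
      obtain ⟨_, ⟨i, hiI, rfl⟩, hle, -⟩ := hyP
      have := hle i
      simp only [hv, Function.update_self] at this
      linarith
  refine ⟨?_, key⟩
  apply subset_antisymm
  · intro q hq P hP
    obtain ⟨V, -, -, -, rfl, hQP⟩ := hP
    exact hQP hq
  · intro y hy
    -- first, y ∈ box m M since box m M itself is in the family
    have hbox : box m M ∈ {P | ∃ V : Set (Fin p → ℝ), V.Finite ∧ V.Nonempty ∧ V ⊆ box m M ∧
        P = copolyblock V M ∧ Q ⊆ P} := by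
      refine ⟨{m}, Set.finite_singleton m, Set.singleton_nonempty m, ?_, ?_, ?_⟩
      · rintro x hx; subst hx; exact ⟨le_rfl, hmM⟩
      · simp [copolyblock]
      · intro q hq
        simpa [copolyblock] using hQsub hq
    have hymM : y ∈ box m M := hy _ hbox
    by_contra hyQ
    obtain ⟨V, hVfin, hVne, hVsub, hQP, hyP⟩ := key y hymM hyQ
    exact hyP (hy _ ⟨V, hVfin, hVne, hVsub, rfl, hQP⟩)
end

section
/- Cutting a copolyblock by a cutting cone yields the copolyblock with the updated vertex set: let P = ⋃_{u∈V}[u,M] be a copolyblock with finite vertex set V ⊆ [m,M], let v ∈ V, and let w ∈ ℝ^p satisfy v < w ≤ M; assume v is the only element u of V with u < w. Then P \ (w − int ℝ₊^p) = ⋃_{u∈V'}[u,M], where V' = (V \ {v}) ∪ {v + (w_i − v_i)e^i : i = 1,…,p} and e^i denotes the i-th standard unit vector of ℝ^p. -/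
theorem stmt_10 {p : ℕ} (hp : 2 ≤ p)
    (m M : Fin p → ℝ) (hmM : m ≤ M)
    (V : Set (Fin p → ℝ)) (hfin : V.Finite) (hsub : V ⊆ box m M)
    (v : Fin p → ℝ) (hv : v ∈ V)
    (w : Fin p → ℝ) (hvw : ∀ j, v j < w j) (hwM : w ≤ M)
    (huniq : ∀ u ∈ V, (∀ j, u j < w j) → u = v) :
    copolyblock V M \ {y | ∀ j, y j < w j} =
      copolyblock ((V \ {v}) ∪
        Set.range (fun i : Fin p => v + (w i - v i) • (Pi.single i (1 : ℝ) : Fin p → ℝ))) M := by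
  ext y
  simp only [copolyblock, box, Set.mem_diff, Set.mem_setOf_eq, Set.mem_iUnion,
    Set.mem_union, Set.mem_singleton_iff, Set.mem_range, exists_prop]
  constructor
  · rintro ⟨⟨u, hu, huy, hyM⟩, hnot⟩
    push_neg at hnot
    obtain ⟨j, hj⟩ := hnot
    by_cases huv : u = v
    · subst huv
      refine ⟨u + (w j - u j) • (Pi.single j (1:ℝ) : Fin p → ℝ), Or.inr ⟨j, rfl⟩, ?_, hyM⟩
      intro i
      simp only [Pi.add_apply, Pi.smul_apply, Pi.single_apply, smul_eq_mul]
      by_cases hij : i = j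
      · subst hij; simp only [eq_self_iff_true, if_true, mul_one]; linarith
      · simp only [if_neg hij, mul_zero, add_zero]; exact huy i
    · exact ⟨u, Or.inl ⟨hu, huv⟩, huy, hyM⟩
  · rintro ⟨u, hu, huy, hyM⟩
    rcases hu with ⟨hu, huv⟩ | ⟨i, rfl⟩
    · refine ⟨⟨u, hu, huy, hyM⟩, fun hlt => ?_⟩
      exact huv (huniq u hu fun j => lt_of_le_of_lt (huy j) (hlt j))
    · refine ⟨⟨v, hv, fun k => le_trans ?_ (huy k), hyM⟩, fun hlt => ?_⟩
      · simp only [Pi.add_apply, Pi.smul_apply, Pi.single_apply, smul_eq_mul]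
        by_cases hik : k = i
        · subst hik; simp only [eq_self_iff_true, if_true, mul_one]; linarith [(hvw k).le]
        · simp [hik]
      · have := huy i
        simp only [Pi.add_apply, Pi.smul_apply, Pi.single_apply, smul_eq_mul, if_pos rfl, if_true, mul_one] at this
        linarith [hlt i]
end

section
/- For each v ∈ [m,M] with v ∉ Y⋄, the Euclidean distance from v to Y⋄ equals the Euclidean distance from v to Y⁺: d(v, Y⋄) = d(v, Y⁺), where d(v,Q) = inf_{y∈Q} ‖v − y‖. -/
theorem stmt_11 {n p : ℕ} (hn : 1 ≤ n) (hp : 2 ≤ p)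
    (S : Set (EuclideanSpace ℝ (Fin n))) (hSne : S.Nonempty)
    (hSconv : Convex ℝ S) (hScomp : IsCompact S)
    (f : EuclideanSpace ℝ (Fin n) → EuclideanSpace ℝ (Fin p)) (hfcont : Continuous f)
    (hfsqc : ∀ i, ∀ x1 ∈ S, ∀ x2 ∈ S, ∀ l : ℝ, 0 < l → l < 1 →
      f x1 i < f x2 i → f (l • x1 + (1 - l) • x2) i < f x2 i)
    (m M : EuclideanSpace ℝ (Fin p)) (hbox : ∀ x ∈ S, ∀ j, m j ≤ f x j ∧ f x j ≤ M j)
    (v : EuclideanSpace ℝ (Fin p)) (hv : ∀ j, m j ≤ v j ∧ v j ≤ M j)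
    (hvnot : v ∉ {y : EuclideanSpace ℝ (Fin p) | ∃ x ∈ S, ∀ j, f x j ≤ y j} ∩
      {y : EuclideanSpace ℝ (Fin p) | ∀ j, y j ≤ M j}) :
    Metric.infDist v ({y : EuclideanSpace ℝ (Fin p) | ∃ x ∈ S, ∀ j, f x j ≤ y j} ∩
        {y : EuclideanSpace ℝ (Fin p) | ∀ j, y j ≤ M j}) =
      Metric.infDist v {y : EuclideanSpace ℝ (Fin p) | ∃ x ∈ S, ∀ j, f x j ≤ y j} := by
  obtain ⟨x0, hx0⟩ := hSne
  have hYne : ({y : EuclideanSpace ℝ (Fin p) | ∃ x ∈ S, ∀ j, f x j ≤ y j}).Nonempty :=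
    ⟨f x0, x0, hx0, fun j => le_refl _⟩
  have hDne : ({y : EuclideanSpace ℝ (Fin p) | ∃ x ∈ S, ∀ j, f x j ≤ y j} ∩
      {y : EuclideanSpace ℝ (Fin p) | ∀ j, y j ≤ M j}).Nonempty :=
    ⟨f x0, ⟨x0, hx0, fun j => le_refl _⟩, fun j => (hbox x0 hx0 j).2⟩
  refine le_antisymm ?_ ?_
  · by_contra hcon
    rw [not_le] at hcon
    obtain ⟨y, hy, hylt⟩ := (Metric.infDist_lt_iff hYne).1 hcon
    obtain ⟨x, hxS, hxy⟩ := hy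
    set y' : EuclideanSpace ℝ (Fin p) := WithLp.toLp 2 (fun j => min (y j) (M j)) with hy'
    have hy'mem : y' ∈ {y : EuclideanSpace ℝ (Fin p) | ∃ x ∈ S, ∀ j, f x j ≤ y j} ∩
        {y : EuclideanSpace ℝ (Fin p) | ∀ j, y j ≤ M j} := by
      refine ⟨⟨x, hxS, fun j => le_min (hxy j) (hbox x hxS j).2⟩, fun j => min_le_right _ _⟩
    have hdist : dist v y' ≤ dist v y := by
      rw [EuclideanSpace.dist_eq, EuclideanSpace.dist_eq]
      apply Real.sqrt_le_sqrt
      apply Finset.sum_le_sum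
      intro j _
      rcases le_or_gt (y j) (M j) with h | h
      · simp [hy', min_eq_left h]
      · have h1 : v j ≤ M j := (hv j).2
        simp only [hy', PiLp.toLp_apply, min_eq_right h.le, Real.dist_eq, sq_abs]
        nlinarith
    exact absurd (lt_of_le_of_lt (le_trans (Metric.infDist_le_dist_of_mem hy'mem) hdist) hylt)
      (lt_irrefl _)
  · exact Metric.infDist_le_infDist_of_subset Set.inter_subset_left hDne
end

section
/- Let P = ⋃_{v∈V}[v,M] be a copolyblock with finite nonempty vertex set V ⊆ [m,M] such that Y⋄ ⊆ P. For each v ∈ V, let t_v be the optimal value of problem (P²(v)), i.e. t_v = min_{x∈S} max_{1≤j≤p} (f_j(x) − v_j)/d̂_j, and set w_v = v + t_v·d̂. Then the Hausdorff distance between P and Y⋄ satisfies d_H(P, Y⋄) ≤ max_{v∈V} ‖w_v − v‖. -/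
lemma euc_norm_le {p : ℕ} (u w : EuclideanSpace ℝ (Fin p))
    (h : ∀ j, |u j| ≤ |w j|) : ‖u‖ ≤ ‖w‖ := by
  rw [EuclideanSpace.norm_eq, EuclideanSpace.norm_eq]
  apply Real.sqrt_le_sqrt
  apply Finset.sum_le_sum
  intro j _
  exact pow_le_pow_left₀ (abs_nonneg _) (h j) 2

set_option maxHeartbeats 1000000 in
theorem stmt_12 {n p : ℕ} (hn : 1 ≤ n) (hp : 2 ≤ p)
    (S : Set (EuclideanSpace ℝ (Fin n))) (hSne : S.Nonempty)
    (hSconv : Convex ℝ S) (hScomp : IsCompact S)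
    (f : EuclideanSpace ℝ (Fin n) → EuclideanSpace ℝ (Fin p)) (hfcont : Continuous f)
    (hfsqc : ∀ i, ∀ x1 ∈ S, ∀ x2 ∈ S, ∀ l : ℝ, 0 < l → l < 1 →
      f x1 i < f x2 i → f (l • x1 + (1 - l) • x2) i < f x2 i)
    (m M : EuclideanSpace ℝ (Fin p)) (hbox : ∀ x ∈ S, ∀ j, m j ≤ f x j ∧ f x j ≤ M j)
    (d : EuclideanSpace ℝ (Fin p)) (hd : ∀ j, 0 < d j)
    -- the copolyblock `P` with vertex set `V ⊆ [m, M]`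
    (V : Finset (EuclideanSpace ℝ (Fin p))) (hVne : V.Nonempty)
    (hVsub : ∀ v ∈ V, ∀ j, m j ≤ v j ∧ v j ≤ M j)
    -- `Y⋄ ⊆ P`
    (hYP : ({y : EuclideanSpace ℝ (Fin p) | ∃ x ∈ S, ∀ j, f x j ≤ y j} ∩
        {y : EuclideanSpace ℝ (Fin p) | ∀ j, y j ≤ M j}) ⊆
      ⋃ v ∈ V, {z : EuclideanSpace ℝ (Fin p) | ∀ j, v j ≤ z j ∧ z j ≤ M j})
    -- `t_v` is the optimal value of `(P²(v))`
    (tv : EuclideanSpace ℝ (Fin p) → ℝ)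
    (htv : ∀ v ∈ V, IsLeast ((fun x => ⨆ j, (f x j - v j) / d j) '' S) (tv v)) :
    Metric.hausdorffDist
        (⋃ v ∈ V, {z : EuclideanSpace ℝ (Fin p) | ∀ j, v j ≤ z j ∧ z j ≤ M j})
        ({y : EuclideanSpace ℝ (Fin p) | ∃ x ∈ S, ∀ j, f x j ≤ y j} ∩
          {y : EuclideanSpace ℝ (Fin p) | ∀ j, y j ≤ M j}) ≤
      V.sup' hVne fun v => ‖(v + tv v • d) - v‖ := by
  have hC0 : (0:ℝ) ≤ V.sup' hVne fun v => ‖(v + tv v • d) - v‖ :=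
    le_trans (norm_nonneg _) (Finset.le_sup' (fun v => ‖(v + tv v • d) - v‖) hVne.choose_spec)
  apply Metric.hausdorffDist_le_of_mem_dist hC0
  · -- every point of P is close to Y⋄
    intro z hz
    rw [Set.mem_iUnion₂] at hz
    obtain ⟨v, hv, hzv⟩ := hz
    obtain ⟨hleast, _⟩ := htv v hv
    obtain ⟨xs, hxs, hxseq⟩ := hleast
    -- key bound: f xs j ≤ v j + tv v * d j
    have hxseq' : (⨆ j, (f xs j - v j) / d j) = tv v := hxseq
    have hkey : ∀ j, f xs j - v j ≤ tv v * d j := by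
      intro j
      have hbdd : BddAbove (Set.range fun j => (f xs j - v j) / d j) :=
        (Set.finite_range _).bddAbove
      have h0 := le_ciSup hbdd j
      rw [hxseq'] at h0
      exact (div_le_iff₀ (hd j)).mp h0
    set y : EuclideanSpace ℝ (Fin p) := WithLp.toLp 2 (fun j => max (z j) (f xs j)) with hy
    refine ⟨y, ⟨⟨xs, hxs, fun j => le_max_right _ _⟩,
      fun j => max_le (hzv j).2 (hbox xs hxs j).2⟩, ?_⟩
    have hdist : dist z y ≤ ‖(v + tv v • d) - v‖ := by
      rw [dist_eq_norm]
      have : (v + tv v • d) - v = tv v • d := by abel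
      rw [this]
      apply euc_norm_le
      intro j
      have h1 : z j ≤ y j := le_max_left _ _
      have h2 : y j - z j ≤ |tv v * d j| := by
        rcases max_cases (z j) (f xs j) with ⟨heq, _⟩ | ⟨heq, _⟩
        · simp [hy, heq, abs_nonneg, mul_nonneg]
        · have : f xs j - z j ≤ tv v * d j :=
            le_trans (by linarith [(hzv j).1]) (hkey j)
          calc y j - z j = f xs j - z j := by rw [hy]; simp [heq]
            _ ≤ tv v * d j := this
            _ ≤ |tv v * d j| := le_abs_self _
      have hsub : (z - y) j = z j - y j := rfl
      have hsm : (tv v • d) j = tv v * d j := rfl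
      rw [hsub, hsm, abs_sub_comm, abs_of_nonneg (by linarith : (0:ℝ) ≤ y j - z j)]
      exact h2
    exact le_trans hdist (Finset.le_sup' (fun v => ‖(v + tv v • d) - v‖) hv)
  · -- Y⋄ ⊆ P
    intro y hy
    exact ⟨y, hYP hy, by rw [dist_self]; exact hC0⟩
end

section
/- For each v ∈ [m,M] with v ∉ Y⋄, letting t_v and t_m denote the optimal values of problems (P²(v)) and (P²(m)) respectively, one has 0 < t_v ≤ t_m, and the point w_v = v + t_v·d̂ lies in the box [m, M'], where M' = M + t_m·d̂; in particular M' > M. -/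
theorem stmt_13 {n p : ℕ} (hn : 1 ≤ n) (hp : 2 ≤ p)
    (S : Set (Fin n → ℝ)) (hSne : S.Nonempty) (hSconv : Convex ℝ S) (hScomp : IsCompact S)
    (f : (Fin n → ℝ) → (Fin p → ℝ)) (hfcont : Continuous f)
    (hfsqc : ∀ i, ∀ x1 ∈ S, ∀ x2 ∈ S, ∀ l : ℝ, 0 < l → l < 1 →
      f x1 i < f x2 i → f (l • x1 + (1 - l) • x2) i < f x2 i)
    (m M : Fin p → ℝ) (hbox : ∀ x ∈ S, m ≤ f x ∧ f x ≤ M)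
    (d : Fin p → ℝ) (hd : ∀ j, 0 < d j)
    (v : Fin p → ℝ) (hv : m ≤ v ∧ v ≤ M)
    (hvnot : v ∉ {y : Fin p → ℝ | ∃ x ∈ S, ∀ j, f x j ≤ y j} ∩ {y | y ≤ M})
    -- `t_v` and `t_m` are the optimal values of `(P²(v))` and `(P²(m))`
    (tv tm : ℝ)
    (htv : IsLeast ((fun x => ⨆ j, (f x j - v j) / d j) '' S) tv)
    (htm : IsLeast ((fun x => ⨆ j, (f x j - m j) / d j) '' S) tm) :
    0 < tv ∧ tv ≤ tm ∧
      (∀ j, m j ≤ v j + tv * d j) ∧ (∀ j, v j + tv * d j ≤ M j + tm * d j) ∧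
      (∀ j, M j < M j + tm * d j) := by
  haveI : Nonempty (Fin p) := ⟨⟨0, by omega⟩⟩
  obtain ⟨⟨x0, hx0S, hx0⟩, htvlb⟩ := htv
  obtain ⟨⟨x1, hx1S, hx1⟩, htmlb⟩ := htm
  have hnot : ¬ ∀ j, f x0 j ≤ v j := fun h => hvnot ⟨⟨x0, hx0S, h⟩, hv.2⟩
  push_neg at hnot
  obtain ⟨j0, hj0⟩ := hnot
  have htv_pos : 0 < tv := by
    have hx0' : (⨆ j, (f x0 j - v j) / d j) = tv := hx0
    have h1 : (f x0 j0 - v j0) / d j0 ≤ tv := by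
      rw [← hx0']
      exact le_ciSup (f := fun j => (f x0 j - v j) / d j) (Finite.bddAbove_range _) j0
    have h2 : 0 < (f x0 j0 - v j0) / d j0 := div_pos (by linarith) (hd j0)
    linarith
  have htvtm : tv ≤ tm := by
    have h1 : tv ≤ ⨆ j, (f x1 j - v j) / d j := htvlb ⟨x1, hx1S, rfl⟩
    have h2 : (⨆ j, (f x1 j - v j) / d j) ≤ ⨆ j, (f x1 j - m j) / d j := by
      apply ciSup_mono (Finite.bddAbove_range _)
      intro j
      exact (div_le_div_iff_of_pos_right (hd j)).mpr (by linarith [hv.1 j])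
    have hx1' : (⨆ j, (f x1 j - m j) / d j) = tm := hx1
    rw [hx1'] at h2
    linarith
  have htm_pos : 0 < tm := lt_of_lt_of_le htv_pos htvtm
  refine ⟨htv_pos, htvtm, fun j => ?_, fun j => ?_, fun j => ?_⟩
  · nlinarith [hv.1 j, mul_pos htv_pos (hd j)]
  · nlinarith [hv.2 j, mul_le_mul_of_nonneg_right htvtm (hd j).le]
  · nlinarith [mul_pos htm_pos (hd j)]
end

section
/- For any copolyblock Q = ⋃_{v∈V}[v,M] with finite nonempty vertex set V ⊆ [m,M], the set of weakly nondominated points of Q equals the intersection of the topological boundary of Q⁺ = Q + ℝ₊^p with the set M − ℝ₊^p: WMin Q = ∂Q⁺ ∩ (M − ℝ₊^p). -/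
open Pointwise

theorem stmt_14 {p : ℕ} (hp : 2 ≤ p)
    (m M : Fin p → ℝ) (hmM : m ≤ M)
    (V : Set (Fin p → ℝ)) (hfin : V.Finite) (hne : V.Nonempty) (hsub : V ⊆ box m M) :
    wMinSet (copolyblock V M) =
      frontier (copolyblock V M + posOrthant p) ∩ {y | y ≤ M} := by
  set Q := copolyblock V M with hQdef
  have hQmem : ∀ y, y ∈ Q ↔ ∃ v ∈ V, v ≤ y ∧ y ≤ M := by
    intro y
    simp only [hQdef, copolyblock, box, Set.mem_iUnion, Set.mem_setOf_eq, exists_prop]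
  -- Q + ℝ₊ = union of upper sets
  have hS : Q + posOrthant p = ⋃ v ∈ V, Set.Ici v := by
    ext y
    simp only [Set.mem_add, Set.mem_iUnion, Set.mem_Ici, posOrthant, Set.mem_setOf_eq,
      exists_prop]
    constructor
    · rintro ⟨q, hq, r, hr, rfl⟩
      rcases (hQmem q).1 hq with ⟨v, hv, hvq, _⟩
      exact ⟨v, hv, fun j => le_trans (hvq j) (le_add_of_nonneg_right (hr j))⟩
    · rintro ⟨v, hv, hvy⟩
      refine ⟨v, (hQmem v).2 ⟨v, hv, le_refl v, (hsub hv).2⟩, y - v,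
        fun j => sub_nonneg.2 (hvy j), by ring⟩
  have hclosed : IsClosed (Q + posOrthant p) := by
    rw [hS]
    refine hfin.isClosed_biUnion fun v _ => ?_
    have : Set.Ici v = ⋂ j, (fun y : Fin p → ℝ => y j) ⁻¹' Set.Ici (v j) := by
      ext z
      simp [Set.mem_Ici, Pi.le_def]
    rw [this]
    exact isClosed_iInter fun j => isClosed_Ici.preimage (continuous_apply j)
  have hInt : interior (Q + posOrthant p) = ⋃ v ∈ V, {y | ∀ j, v j < y j} := by
    rw [hS]
    apply Set.Subset.antisymm
    · intro y hy
      rcases Metric.mem_nhds_iff.1 (mem_interior_iff_mem_nhds.1 hy) with ⟨ε, hε, hball⟩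
      have hy' : (fun j => y j - ε / 2) ∈ ⋃ v ∈ V, Set.Ici v := by
        apply hball
        rw [Metric.mem_ball, dist_pi_lt_iff hε]
        intro j
        rw [Real.dist_eq]
        have h1 : y j - ε / 2 - y j = -(ε / 2) := by ring
        rw [h1, abs_neg, abs_of_pos (by linarith)]
        linarith
      rcases Set.mem_iUnion₂.1 hy' with ⟨v, hv, hvy⟩
      refine Set.mem_iUnion₂.2 ⟨v, hv, fun j => ?_⟩
      have := hvy j
      simp only [Set.mem_Ici] at hvy
      have := hvy j
      dsimp at this
      linarith
    · refine Set.iUnion₂_subset fun v hv => ?_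
      have hopen : IsOpen {y : Fin p → ℝ | ∀ j, v j < y j} := by
        have : {y : Fin p → ℝ | ∀ j, v j < y j} =
            ⋂ j, (fun y : Fin p → ℝ => y j) ⁻¹' Set.Ioi (v j) := by
          ext z; simp
        rw [this]
        exact isOpen_iInter_of_finite fun j => isOpen_Ioi.preimage (continuous_apply j)
      have hsub' : {y : Fin p → ℝ | ∀ j, v j < y j} ⊆ ⋃ v ∈ V, Set.Ici v := by
        intro y hy
        exact Set.mem_iUnion₂.2 ⟨v, hv, fun j => le_of_lt (hy j)⟩
      exact interior_maximal hsub' hopen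
  have hfr : frontier (Q + posOrthant p) =
      (⋃ v ∈ V, Set.Ici v) \ ⋃ v ∈ V, {y | ∀ j, v j < y j} := by
    rw [hclosed.frontier_eq, hInt, hS]
  ext y
  rw [hfr]
  simp only [wMinSet, Set.mem_setOf_eq, Set.mem_inter_iff,
    Set.mem_diff, Set.mem_iUnion, Set.mem_Ici, exists_prop]
  constructor
  · rintro ⟨hyQ, hnd⟩
    rcases (hQmem y).1 hyQ with ⟨v, hv, hvy, hyM⟩
    refine ⟨⟨⟨v, hv, hvy⟩, ?_⟩, hyM⟩
    rintro ⟨w, hw, hwy⟩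
    exact hnd ⟨w, (hQmem w).2 ⟨w, hw, le_refl w, (hsub hw).2⟩, hwy⟩
  · rintro ⟨⟨⟨v, hv, hvy⟩, hni⟩, hyM⟩
    refine ⟨(hQmem y).2 ⟨v, hv, hvy, hyM⟩, ?_⟩
    rintro ⟨q', hq', hlt⟩
    rcases (hQmem q').1 hq' with ⟨w, hw, hwq, _⟩
    exact hni ⟨w, hw, fun j => lt_of_le_of_lt (hwq j) (hlt j)⟩
end

section
/- The set of weakly nondominated points of Y⋄ equals the intersection of the topological boundary of Y⁺ with M − ℝ₊^p: WMin Y⋄ = ∂Y⁺ ∩ (M − ℝ₊^p). -/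
open Pointwise

theorem stmt_15 {n p : ℕ} (hn : 1 ≤ n) (hp : 2 ≤ p)
    (S : Set (Fin n → ℝ)) (hSne : S.Nonempty) (hSconv : Convex ℝ S) (hScomp : IsCompact S)
    (f : (Fin n → ℝ) → (Fin p → ℝ)) (hfcont : Continuous f)
    (hfsqc : ∀ i, ∀ x1 ∈ S, ∀ x2 ∈ S, ∀ l : ℝ, 0 < l → l < 1 →
      f x1 i < f x2 i → f (l • x1 + (1 - l) • x2) i < f x2 i)
    (m M : Fin p → ℝ) (hbox : ∀ x ∈ S, m ≤ f x ∧ f x ≤ M) :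
    wMinSet ((f '' S + posOrthant p) ∩ {y | y ≤ M}) =
      frontier (f '' S + posOrthant p) ∩ {y | y ≤ M} := by
  set Y : Set (Fin p → ℝ) := f '' S + posOrthant p with hYdef
  have hOclosed : IsClosed (posOrthant p) := by
    have : posOrthant p = ⋂ j, {y : Fin p → ℝ | 0 ≤ y j} := by
      ext y; simp [posOrthant, Set.mem_iInter]
    rw [this]
    exact isClosed_iInter fun j => isClosed_le continuous_const (continuous_apply j)
  have hYclosed : IsClosed Y := hOclosed.add_left_of_isCompact (hScomp.image hfcont)
  have habs : ∀ y ∈ Y, ∀ d : Fin p → ℝ, (∀ j, 0 ≤ d j) → y + d ∈ Y := by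
    rintro y ⟨a, ha, b, hb, rfl⟩ d hd
    exact ⟨a, ha, b + d, fun j => add_nonneg (hb j) (hd j), by funext j; simp only [Pi.add_apply]; ring⟩
  ext q
  constructor
  · rintro ⟨⟨hqY, hqM⟩, hnd⟩
    refine ⟨⟨subset_closure hqY, fun hint => ?_⟩, hqM⟩
    have hg : Continuous (fun t : ℝ => (fun j => q j - t : Fin p → ℝ)) :=
      continuous_pi fun j => continuous_const.sub continuous_id
    have h0 : (fun j => q j - (0:ℝ)) = q := by funext j; simp
    have hev : ∀ᶠ t in nhds (0:ℝ), (fun j => q j - t) ∈ interior Y := by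
      have := hg.continuousAt (x := (0:ℝ))
      rw [ContinuousAt, h0] at this
      exact this.eventually (isOpen_interior.eventually_mem hint)
    have hev' : ∀ᶠ t in nhdsWithin (0:ℝ) (Set.Ioi 0),
        (fun j => q j - t) ∈ interior Y ∧ t ∈ Set.Ioi (0:ℝ) :=
      (hev.filter_mono nhdsWithin_le_nhds).and self_mem_nhdsWithin
    obtain ⟨t, htY, ht⟩ := hev'.exists
    apply hnd
    refine ⟨fun j => q j - t, ⟨interior_subset htY, fun j => ?_⟩, fun j => ?_⟩
    · show q j - t ≤ M j
      have := hqM j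
      have := ht.out
      simp only [Set.mem_setOf_eq] at *
      linarith
    · show q j - t < q j
      have := ht.out
      linarith
  · rintro ⟨hqf, hqM⟩
    have hqY : q ∈ Y := hYclosed.closure_subset (frontier_subset_closure hqf)
    have hqni : q ∉ interior Y := fun h => hqf.2 h
    refine ⟨⟨hqY, hqM⟩, ?_⟩
    rintro ⟨q', ⟨hq'Y, _⟩, hlt⟩
    apply hqni
    have hUopen : IsOpen {y : Fin p → ℝ | ∀ j, q' j < y j} := by
      have : {y : Fin p → ℝ | ∀ j, q' j < y j} = ⋂ j, {y | q' j < y j} := by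
        ext y; simp [Set.mem_iInter]
      rw [this]
      exact isOpen_iInter_of_finite fun j =>
        isOpen_lt continuous_const (continuous_apply j)
    refine mem_interior.mpr ⟨_, ?_, hUopen, hlt⟩
    intro y hy
    have := habs q' hq'Y (y - q') (fun j => sub_nonneg.mpr (le_of_lt (hy j)))
    simpa using this
end

section
/- Let ϵ > 0, let e = (1,…,1) ∈ ℝ^p, and let U ⊆ ℝ^p satisfy Y⋄ ⊆ U ⊆ Y⋄ + ϵ·B, where B is the closed Euclidean unit ball of ℝ^p. Define U_ε = {q ∈ U : (q − ϵe − int ℝ₊^p) ∩ U = ∅} and ES = ⋃_{y ∈ U_ε ∩ Y⋄} {x ∈ S : f(x) ≤ y}. Then S_WE ⊆ ES ⊆ S_ε, where S_ε = {x̄ ∈ S : there is no x ∈ S with f(x) < f(x̄) − ϵe} is the set of weakly ε-efficient solutions of (QVP). -/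
open Pointwise

lemma coord_abs_le_norm {p : ℕ} (b : EuclideanSpace ℝ (Fin p)) (j : Fin p) :
    |b j| ≤ ‖b‖ := by
  rw [EuclideanSpace.norm_eq]
  have h1 : |b j| = Real.sqrt (‖b j‖ ^ 2) := by
    rw [Real.sqrt_sq_eq_abs, abs_norm, Real.norm_eq_abs]
  rw [h1]
  apply Real.sqrt_le_sqrt
  exact Finset.single_le_sum (f := fun i => ‖b i‖ ^ 2)
    (fun i _ => by positivity) (Finset.mem_univ j)

theorem stmt_17 {n p : ℕ} (hn : 1 ≤ n) (hp : 2 ≤ p)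
    (S : Set (EuclideanSpace ℝ (Fin n))) (hSne : S.Nonempty)
    (hSconv : Convex ℝ S) (hScomp : IsCompact S)
    (f : EuclideanSpace ℝ (Fin n) → EuclideanSpace ℝ (Fin p)) (hfcont : Continuous f)
    (hfsqc : ∀ i, ∀ x1 ∈ S, ∀ x2 ∈ S, ∀ l : ℝ, 0 < l → l < 1 →
      f x1 i < f x2 i → f (l • x1 + (1 - l) • x2) i < f x2 i)
    (m M : EuclideanSpace ℝ (Fin p)) (hbox : ∀ x ∈ S, ∀ j, m j ≤ f x j ∧ f x j ≤ M j)
    (eps : ℝ) (heps : 0 < eps)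
    (U : Set (EuclideanSpace ℝ (Fin p)))
    -- `Y⋄ ⊆ U ⊆ Y⋄ + ϵ·B` with `B` the closed Euclidean unit ball
    (hU1 : ({y : EuclideanSpace ℝ (Fin p) | ∃ x ∈ S, ∀ j, f x j ≤ y j} ∩
        {y : EuclideanSpace ℝ (Fin p) | ∀ j, y j ≤ M j}) ⊆ U)
    (hU2 : U ⊆ ({y : EuclideanSpace ℝ (Fin p) | ∃ x ∈ S, ∀ j, f x j ≤ y j} ∩
        {y : EuclideanSpace ℝ (Fin p) | ∀ j, y j ≤ M j}) +
      eps • Metric.closedBall (0 : EuclideanSpace ℝ (Fin p)) 1) :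
    -- `S_WE ⊆ ES ⊆ S_ε` where
    -- `U_ε = {q ∈ U ∣ (q − ϵe − int ℝ₊^p) ∩ U = ∅}` and
    -- `ES = ⋃_{y ∈ U_ε ∩ Y⋄} {x ∈ S ∣ f(x) ≤ y}`
    ({x ∈ S | ¬ ∃ x' ∈ S, ∀ j, f x' j < f x j} ⊆
      {x ∈ S | ∃ y, (y ∈ {q ∈ U | ¬ ∃ q' ∈ U, ∀ j, q' j < q j - eps} ∩
          ({y : EuclideanSpace ℝ (Fin p) | ∃ x' ∈ S, ∀ j, f x' j ≤ y j} ∩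
            {y : EuclideanSpace ℝ (Fin p) | ∀ j, y j ≤ M j})) ∧ ∀ j, f x j ≤ y j}) ∧
    ({x ∈ S | ∃ y, (y ∈ {q ∈ U | ¬ ∃ q' ∈ U, ∀ j, q' j < q j - eps} ∩
          ({y : EuclideanSpace ℝ (Fin p) | ∃ x' ∈ S, ∀ j, f x' j ≤ y j} ∩
            {y : EuclideanSpace ℝ (Fin p) | ∀ j, y j ≤ M j})) ∧ ∀ j, f x j ≤ y j} ⊆
      {x ∈ S | ¬ ∃ x' ∈ S, ∀ j, f x' j < f x j - eps}) := by
  constructor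
  · rintro x ⟨hxS, hWE⟩
    refine ⟨hxS, f x, ⟨⟨?_, ?_⟩, ⟨⟨x, hxS, fun j => le_rfl⟩, fun j => (hbox x hxS j).2⟩⟩,
      fun j => le_rfl⟩
    · exact hU1 ⟨⟨x, hxS, fun j => le_rfl⟩, fun j => (hbox x hxS j).2⟩
    · rintro ⟨q', hq'U, hq'lt⟩
      obtain ⟨z, hz, b, hb, hzb⟩ := hU2 hq'U
      obtain ⟨c, hc, rfl⟩ := hb
      simp only [Metric.mem_closedBall, dist_zero_right] at hc
      obtain ⟨⟨x', hx'S, hx'le⟩, -⟩ := hz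
      apply hWE
      refine ⟨x', hx'S, fun j => ?_⟩
      have hcj : |c j| ≤ 1 := le_trans (coord_abs_le_norm c j) hc
      have hzj : z j = q' j - eps * c j := by
        have := congrArg (fun v : EuclideanSpace ℝ (Fin p) => v j) hzb
        simp only [PiLp.add_apply, PiLp.smul_apply, smul_eq_mul] at this
        linarith
      have : eps * c j ≥ -eps := by nlinarith [abs_le.mp hcj]
      calc f x' j ≤ z j := hx'le j
        _ = q' j - eps * c j := hzj
        _ ≤ q' j + eps := by linarith
        _ < f x j := by have := hq'lt j; linarith
  · rintro x ⟨hxS, y, ⟨⟨⟨hyU, hyeps⟩, ⟨-, -⟩⟩, hfxy⟩⟩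
    refine ⟨hxS, ?_⟩
    rintro ⟨x', hx'S, hx'lt⟩
    apply hyeps
    refine ⟨f x', hU1 ⟨⟨x', hx'S, fun j => le_rfl⟩, fun j => (hbox x' hx'S j).2⟩, fun j => ?_⟩
    have := hx'lt j; have := hfxy j; linarith
end

section
/- Let Q ⊆ [m,M] be a nonempty compact conormal set, let v ∈ [m,M] with v ∉ Q, and let z* ∈ Q be a nearest point of Q to v in the Euclidean norm, i.e. ‖v − z*‖ = d(v,Q). Then z* ∈ v + ℝ₊^p, i.e. v ≤ z* componentwise. -/
theorem stmt_18 {p : ℕ} (hp : 2 ≤ p)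
    (m M : EuclideanSpace ℝ (Fin p)) (hmM : ∀ j, m j ≤ M j)
    (Q : Set (EuclideanSpace ℝ (Fin p)))
    (hQsub : Q ⊆ {z : EuclideanSpace ℝ (Fin p) | ∀ j, m j ≤ z j ∧ z j ≤ M j})
    (hQne : Q.Nonempty) (hQcomp : IsCompact Q)
    (hQconormal : ∀ y ∈ Q, ∀ z : EuclideanSpace ℝ (Fin p),
      (∀ j, y j ≤ z j) → (∀ j, z j ≤ M j) → z ∈ Q)
    (v : EuclideanSpace ℝ (Fin p)) (hv : ∀ j, m j ≤ v j ∧ v j ≤ M j) (hvQ : v ∉ Q)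
    (zs : EuclideanSpace ℝ (Fin p)) (hzs : zs ∈ Q)
    (hnear : dist v zs = Metric.infDist v Q) :
    ∀ j, v j ≤ zs j := by
  by_contra h
  push_neg at h
  obtain ⟨j, hj⟩ := h
  set z' : EuclideanSpace ℝ (Fin p) := WithLp.toLp 2 (fun i => max (zs i) (v i)) with hz'
  have hz'Q : z' ∈ Q := hQconormal zs hzs z' (fun i => le_max_left _ _)
    (fun i => max_le ((hQsub hzs i).2) ((hv i).2))
  have hlt : dist v z' < dist v zs := by
    rw [EuclideanSpace.dist_eq, EuclideanSpace.dist_eq]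
    apply Real.sqrt_lt_sqrt
    · positivity
    · apply Finset.sum_lt_sum
      · intro i _
        rcases le_total (zs i) (v i) with hle | hle
        · have hzv : z' i = v i := max_eq_right hle
          rw [hzv]
          simpa using sq_nonneg (dist (v i) (zs i))
        · have hzv : z' i = zs i := max_eq_left hle
          rw [hzv]
      · refine ⟨j, Finset.mem_univ j, ?_⟩
        have h1 : z' j = v j := max_eq_right hj.le
        rw [h1]
        have hpos : v j - zs j > 0 := sub_pos.mpr hj
        have hd : dist (v j) (zs j) > 0 := by
          rw [Real.dist_eq]; exact lt_of_lt_of_le hpos (le_abs_self _)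
        simpa using pow_pos hd 2
  have h2 := Metric.infDist_le_dist_of_mem (x := v) hz'Q
  rw [← hnear] at h2
  linarith
end
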